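/- Let Ω ⊆ ℝ² be open and let u : Ω → ℝ be a C³ solution of the two-dimensional minimal surface equation E(u) = 0 on Ω. Define v : Ω → ℝ by v(x,y) = u(x,y) − x·∂ₓu(x,y) − y·∂_yu(x,y) (the dilatation symmetry φ₄). Then for every point (x,y) ∈ Ω, the function ε ↦ E(u + εv)(x,y) is differentiable at ε = 0 with derivative 0. -/

import Mathlib

/-- Partial derivative in the `x` direction of a function on `ℝ²`. -/
noncomputable def px (f : ℝ × ℝ → ℝ) (z : ℝ × ℝ) : ℝ := fderiv ℝ f z (1, 0)

/-- Partial derivative in the `y` direction of a function on `ℝ²`. -/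
noncomputable def py (f : ℝ × ℝ → ℝ) (z : ℝ × ℝ) : ℝ := fderiv ℝ f z (0, 1)

/-- The two-dimensional minimal surface operator
`E(w) = (1 + w_y²)·w_xx − 2·w_x·w_y·w_xy + (1 + w_x²)·w_yy`. -/
noncomputable def msOp (w : ℝ × ℝ → ℝ) (z : ℝ × ℝ) : ℝ :=
  (1 + (py w z) ^ 2) * px (px w) z - 2 * px w z * py w z * py (px w) z
    + (1 + (px w z) ^ 2) * py (py w) z


section Helpers

variable {f g : ℝ × ℝ → ℝ} {z e : ℝ × ℝ} {c : ℝ}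

lemma pd_add (hf : DifferentiableAt ℝ f z) (hg : DifferentiableAt ℝ g z) :
    fderiv ℝ (fun w => f w + g w) z e = fderiv ℝ f z e + fderiv ℝ g z e := by
  rw [fderiv_fun_add hf hg]; rfl

lemma pd_mul (hf : DifferentiableAt ℝ f z) (hg : DifferentiableAt ℝ g z) :
    fderiv ℝ (fun w => f w * g w) z e = fderiv ℝ f z e * g z + f z * fderiv ℝ g z e := by
  rw [fderiv_fun_mul hf hg]
  simp only [ContinuousLinearMap.add_apply, ContinuousLinearMap.smul_apply, smul_eq_mul]
  ring

lemma pd_comm (hf : ContDiffAt ℝ 2 f z) (e₁ e₂ : ℝ × ℝ) :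
    fderiv ℝ (fun w => fderiv ℝ f w e₁) z e₂ = fderiv ℝ (fun w => fderiv ℝ f w e₂) z e₁ := by
  have hd : DifferentiableAt ℝ (fderiv ℝ f) z :=
    (hf.fderiv_right (m := 1) (by norm_num)).differentiableAt (by norm_num)
  have key : ∀ e : ℝ × ℝ, fderiv ℝ (fun w => fderiv ℝ f w e) z
      = (fderiv ℝ (fderiv ℝ f) z).flip e := by
    intro e
    rw [fderiv_clm_apply hd (differentiableAt_const e)]
    simp
  have hsymm := hf.isSymmSndFDerivAt (by simp)
  rw [key e₁, key e₂]
  exact hsymm e₂ e₁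

lemma contDiffAt_pd {n : WithTop ℕ∞} (hf : ContDiffAt ℝ (n + 1) f z) (e : ℝ × ℝ) :
    ContDiffAt ℝ n (fun w => fderiv ℝ f w e) z :=
  (hf.fderiv_right le_rfl).clm_apply contDiffAt_const

-- px wrappers
lemma px_congr (h : f =ᶠ[nhds z] g) : px f z = px g z := by
  unfold px; rw [h.fderiv_eq]
lemma py_congr (h : f =ᶠ[nhds z] g) : py f z = py g z := by
  unfold py; rw [h.fderiv_eq]

lemma px_add (hf : DifferentiableAt ℝ f z) (hg : DifferentiableAt ℝ g z) :
    px (fun w => f w + g w) z = px f z + px g z := pd_add hf hg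
lemma py_add (hf : DifferentiableAt ℝ f z) (hg : DifferentiableAt ℝ g z) :
    py (fun w => f w + g w) z = py f z + py g z := pd_add hf hg

lemma pd_sub {f g : ℝ × ℝ → ℝ} {z e : ℝ × ℝ} (hf : DifferentiableAt ℝ f z) (hg : DifferentiableAt ℝ g z) :
    fderiv ℝ (fun w => f w - g w) z e = fderiv ℝ f z e - fderiv ℝ g z e := by
  rw [fderiv_fun_sub hf hg]; rfl

lemma px_sub {f g : ℝ × ℝ → ℝ} {z : ℝ × ℝ} (hf : DifferentiableAt ℝ f z) (hg : DifferentiableAt ℝ g z) :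
    px (fun w => f w - g w) z = px f z - px g z := pd_sub hf hg
lemma py_sub {f g : ℝ × ℝ → ℝ} {z : ℝ × ℝ} (hf : DifferentiableAt ℝ f z) (hg : DifferentiableAt ℝ g z) :
    py (fun w => f w - g w) z = py f z - py g z := pd_sub hf hg

lemma px_neg : px (fun w => -(f w)) z = -(px f z) := by
  unfold px; rw [fderiv_fun_neg]; rfl
lemma py_neg : py (fun w => -(f w)) z = -(py f z) := by
  unfold py; rw [fderiv_fun_neg]; rfl

lemma px_const_mul (hf : DifferentiableAt ℝ f z) :
    px (fun w => c * f w) z = c * px f z := by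
  unfold px; rw [fderiv_const_mul hf]; rfl
lemma py_const_mul (hf : DifferentiableAt ℝ f z) :
    py (fun w => c * f w) z = c * py f z := by
  unfold py; rw [fderiv_const_mul hf]; rfl

lemma px_mul (hf : DifferentiableAt ℝ f z) (hg : DifferentiableAt ℝ g z) :
    px (fun w => f w * g w) z = px f z * g z + f z * px g z := pd_mul hf hg
lemma py_mul (hf : DifferentiableAt ℝ f z) (hg : DifferentiableAt ℝ g z) :
    py (fun w => f w * g w) z = py f z * g z + f z * py g z := pd_mul hf hg

lemma px_fst_mul (hg : DifferentiableAt ℝ g z) :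
    px (fun w => w.1 * g w) z = g z + z.1 * px g z := by
  rw [px_mul differentiableAt_fst hg]
  have : px (fun w : ℝ × ℝ => w.1) z = 1 := by
    unfold px
    rw [show (fun w : ℝ × ℝ => w.1) = (Prod.fst : ℝ × ℝ → ℝ) from rfl, fderiv_fst]; rfl
  rw [this]; ring
lemma py_fst_mul (hg : DifferentiableAt ℝ g z) :
    py (fun w => w.1 * g w) z = z.1 * py g z := by
  rw [py_mul differentiableAt_fst hg]
  have : py (fun w : ℝ × ℝ => w.1) z = 0 := by
    unfold py
    rw [show (fun w : ℝ × ℝ => w.1) = (Prod.fst : ℝ × ℝ → ℝ) from rfl, fderiv_fst]; rfl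
  rw [this]; ring
lemma px_snd_mul (hg : DifferentiableAt ℝ g z) :
    px (fun w => w.2 * g w) z = z.2 * px g z := by
  rw [px_mul differentiableAt_snd hg]
  have : px (fun w : ℝ × ℝ => w.2) z = 0 := by
    unfold px
    rw [show (fun w : ℝ × ℝ => w.2) = (Prod.snd : ℝ × ℝ → ℝ) from rfl, fderiv_snd]; rfl
  rw [this]; ring
lemma py_snd_mul (hg : DifferentiableAt ℝ g z) :
    py (fun w => w.2 * g w) z = g z + z.2 * py g z := by
  rw [py_mul differentiableAt_snd hg]
  have : py (fun w : ℝ × ℝ => w.2) z = 1 := by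
    unfold py
    rw [show (fun w : ℝ × ℝ => w.2) = (Prod.snd : ℝ × ℝ → ℝ) from rfl, fderiv_snd]; rfl
  rw [this]; ring

lemma px_one_add_sq (hf : DifferentiableAt ℝ f z) :
    px (fun w => 1 + f w ^ 2) z = 2 * f z * px f z := by
  have h2 : (fun w => 1 + f w ^ 2) = fun w => 1 + f w * f w := by funext w; ring
  rw [h2]
  unfold px
  rw [fderiv_const_add, pd_mul hf hf]
  show fderiv ℝ f z (1,0) * f z + f z * fderiv ℝ f z (1,0) = 2 * f z * fderiv ℝ f z (1,0)
  ring
lemma py_one_add_sq (hf : DifferentiableAt ℝ f z) :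
    py (fun w => 1 + f w ^ 2) z = 2 * f z * py f z := by
  have h2 : (fun w => 1 + f w ^ 2) = fun w => 1 + f w * f w := by funext w; ring
  rw [h2]
  unfold py
  rw [fderiv_const_add, pd_mul hf hf]
  show fderiv ℝ f z (0,1) * f z + f z * fderiv ℝ f z (0,1) = 2 * f z * fderiv ℝ f z (0,1)
  ring

lemma px_py_comm (hf : ContDiffAt ℝ 2 f z) : px (py f) z = py (px f) z :=
  pd_comm hf (0,1) (1,0)

lemma contDiffAt_px {n : WithTop ℕ∞} (hf : ContDiffAt ℝ (n + 1) f z) :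
    ContDiffAt ℝ n (px f) z := contDiffAt_pd hf (1,0)
lemma contDiffAt_py {n : WithTop ℕ∞} (hf : ContDiffAt ℝ (n + 1) f z) :
    ContDiffAt ℝ n (py f) z := contDiffAt_pd hf (0,1)

lemma affine_hasDerivAt (A0 A1 : ℝ) : HasDerivAt (fun ε : ℝ => A0 + ε * A1) A1 0 := by
  simpa using ((hasDerivAt_id (0:ℝ)).mul_const A1).const_add A0

end Helpers

/-- The dilatation `φ₄ = u − x·u_x − y·u_y` is an infinitesimal symmetry of the
two-dimensional minimal surface equation at every `C³` solution `u`. -/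
theorem dilatation_is_infinitesimal_symmetry
    (Ω : Set (ℝ × ℝ)) (hΩ : IsOpen Ω) (u : ℝ × ℝ → ℝ)
    (hu : ContDiffOn ℝ 3 u Ω) (hsol : ∀ z ∈ Ω, msOp u z = 0) :
    ∀ z ∈ Ω, HasDerivAt
      (fun ε : ℝ => msOp (fun w => u w + ε * (u w - w.1 * px u w - w.2 * py u w)) z) 0 0 := by
  intro z hz
  let v : ℝ × ℝ → ℝ := fun w => u w - w.1 * px u w - w.2 * py u w
  show HasDerivAt (fun ε : ℝ => msOp (fun w => u w + ε * v w) z) 0 0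
  have hmem : Ω ∈ nhds z := hΩ.mem_nhds hz
  have c3 : ∀ w ∈ Ω, ContDiffAt ℝ 3 u w := fun w hw => hu.contDiffAt (hΩ.mem_nhds hw)
  have cux : ∀ w ∈ Ω, ContDiffAt ℝ 2 (px u) w := fun w hw =>
    contDiffAt_px (n := 2) ((c3 w hw).of_le (by norm_num))
  have cuy : ∀ w ∈ Ω, ContDiffAt ℝ 2 (py u) w := fun w hw =>
    contDiffAt_py (n := 2) ((c3 w hw).of_le (by norm_num))
  have cuxx : ContDiffAt ℝ 1 (px (px u)) z := contDiffAt_px (n := 1) ((cux z hz).of_le (by norm_num))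
  have cuxy : ContDiffAt ℝ 1 (py (px u)) z := contDiffAt_py (n := 1) ((cux z hz).of_le (by norm_num))
  have cuyy : ContDiffAt ℝ 1 (py (py u)) z := contDiffAt_py (n := 1) ((cuy z hz).of_le (by norm_num))
  have du : ∀ w ∈ Ω, DifferentiableAt ℝ u w := fun w hw =>
    (c3 w hw).differentiableAt (by norm_num)
  have dux : ∀ w ∈ Ω, DifferentiableAt ℝ (px u) w := fun w hw =>
    (cux w hw).differentiableAt (by norm_num)
  have duy : ∀ w ∈ Ω, DifferentiableAt ℝ (py u) w := fun w hw =>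
    (cuy w hw).differentiableAt (by norm_num)
  have duxx : DifferentiableAt ℝ (px (px u)) z := cuxx.differentiableAt (by norm_num)
  have duxy : DifferentiableAt ℝ (py (px u)) z := cuxy.differentiableAt (by norm_num)
  have duyy : DifferentiableAt ℝ (py (py u)) z := cuyy.differentiableAt (by norm_num)
  have cv : ∀ w ∈ Ω, ContDiffAt ℝ 2 v w := by
    intro w hw
    exact (((c3 w hw).of_le (by norm_num)).sub
      (contDiffAt_fst.mul (cux w hw))).sub (contDiffAt_snd.mul (cuy w hw))
  have dv : ∀ w ∈ Ω, DifferentiableAt ℝ v w := fun w hw =>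
    (cv w hw).differentiableAt (by norm_num)
  have dvx : DifferentiableAt ℝ (px v) z :=
    (contDiffAt_px (n := 1) ((cv z hz).of_le (by norm_num))).differentiableAt (by norm_num)
  have dvy : DifferentiableAt ℝ (py v) z :=
    (contDiffAt_py (n := 1) ((cv z hz).of_le (by norm_num))).differentiableAt (by norm_num)
  -- symmetry of second and third derivatives
  have S1 : ∀ w ∈ Ω, px (py u) w = py (px u) w := fun w hw =>
    px_py_comm ((c3 w hw).of_le (by norm_num))
  have S1e : px (py u) =ᶠ[nhds z] py (px u) := Filter.eventuallyEq_of_mem hmem S1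
  have S2 : px (py (px u)) z = py (px (px u)) z := px_py_comm (cux z hz)
  have S3 : px (py (py u)) z = py (py (px u)) z := by
    rw [px_py_comm (cuy z hz)]
    exact py_congr S1e
  -- first derivatives of v on Ω
  have hvx : ∀ w ∈ Ω, px v w = -(w.1 * px (px u) w + w.2 * py (px u) w) := by
    intro w hw
    have h1 : px v w = px (fun w' => u w' - w'.1 * px u w' - w'.2 * py u w') w := rfl
    rw [h1, px_sub ((du w hw).fun_sub (differentiableAt_fst.fun_mul (dux w hw)))
        (differentiableAt_snd.fun_mul (duy w hw)),
      px_sub (du w hw) (differentiableAt_fst.fun_mul (dux w hw)),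
      px_fst_mul (dux w hw), px_snd_mul (duy w hw), S1 w hw]
    ring
  have hvy : ∀ w ∈ Ω, py v w = -(w.1 * py (px u) w + w.2 * py (py u) w) := by
    intro w hw
    have h1 : py v w = py (fun w' => u w' - w'.1 * px u w' - w'.2 * py u w') w := rfl
    rw [h1, py_sub ((du w hw).fun_sub (differentiableAt_fst.fun_mul (dux w hw)))
        (differentiableAt_snd.fun_mul (duy w hw)),
      py_sub (du w hw) (differentiableAt_fst.fun_mul (dux w hw)),
      py_fst_mul (dux w hw), py_snd_mul (duy w hw)]
    ring
  have hvxe : px v =ᶠ[nhds z] fun w => -(w.1 * px (px u) w + w.2 * py (px u) w) :=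
    Filter.eventuallyEq_of_mem hmem hvx
  have hvye : py v =ᶠ[nhds z] fun w => -(w.1 * py (px u) w + w.2 * py (py u) w) :=
    Filter.eventuallyEq_of_mem hmem hvy
  -- values of v-derivatives at z
  have hqa : px v z = -(z.1 * px (px u) z + z.2 * py (px u) z) := hvx z hz
  have hqb : py v z = -(z.1 * py (px u) z + z.2 * py (py u) z) := hvy z hz
  have hPv : px (px v) z
      = -(px (px u) z + z.1 * px (px (px u)) z + z.2 * py (px (px u)) z) := by
    rw [px_congr hvxe, px_neg,
      px_add (differentiableAt_fst.fun_mul duxx) (differentiableAt_snd.fun_mul duxy),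
      px_fst_mul duxx, px_snd_mul duxy, S2]
  have hQv : py (px v) z
      = -(py (px u) z + z.1 * py (px (px u)) z + z.2 * py (py (px u)) z) := by
    rw [py_congr hvxe, py_neg,
      py_add (differentiableAt_fst.fun_mul duxx) (differentiableAt_snd.fun_mul duxy),
      py_fst_mul duxx, py_snd_mul duxy]
    ring
  have hRv : py (py v) z
      = -(py (py u) z + z.1 * py (py (px u)) z + z.2 * py (py (py u)) z) := by
    rw [py_congr hvye, py_neg,
      py_add (differentiableAt_fst.fun_mul duxy) (differentiableAt_snd.fun_mul duyy),
      py_fst_mul duxy, py_snd_mul duyy]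
    ring
  -- the minimal surface equation and its differentiated forms
  have hE0 : (1 + py u z ^ 2) * px (px u) z - 2 * px u z * py u z * py (px u) z
      + (1 + px u z ^ 2) * py (py u) z = 0 := hsol z hz
  have hmse : msOp u =ᶠ[nhds z] fun _ => (0 : ℝ) := Filter.eventuallyEq_of_mem hmem hsol
  have hEx0 : px (msOp u) z = 0 := by rw [px_congr hmse]; simp [px]
  have hEy0 : py (msOp u) z = 0 := by rw [py_congr hmse]; simp [py]
  have hmsOfun : msOp u = fun w => (1 + py u w ^ 2) * px (px u) w
      - 2 * px u w * py u w * py (px u) w + (1 + px u w ^ 2) * py (py u) w := rfl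
  have hEx : px (msOp u) z
      = 2 * py u z * py (px u) z * px (px u) z + (1 + py u z ^ 2) * px (px (px u)) z
        - ((2 * px (px u) z * py u z + 2 * px u z * py (px u) z) * py (px u) z
            + 2 * px u z * py u z * py (px (px u)) z)
        + (2 * px u z * px (px u) z * py (py u) z + (1 + px u z ^ 2) * py (py (px u)) z) := by
    rw [hmsOfun,
      px_add ((((duy z hz).fun_pow 2).const_add 1).fun_mul duxx |>.fun_sub
        ((((dux z hz).const_mul 2).fun_mul (duy z hz)).fun_mul duxy))
        ((((dux z hz).fun_pow 2).const_add 1).fun_mul duyy),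
      px_sub ((((duy z hz).fun_pow 2).const_add 1).fun_mul duxx)
        ((((dux z hz).const_mul 2).fun_mul (duy z hz)).fun_mul duxy),
      px_mul (((duy z hz).fun_pow 2).const_add 1) duxx,
      px_mul (((dux z hz).const_mul 2).fun_mul (duy z hz)) duxy,
      px_mul ((dux z hz).const_mul 2) (duy z hz),
      px_const_mul (dux z hz),
      px_mul (((dux z hz).fun_pow 2).const_add 1) duyy,
      px_one_add_sq (duy z hz), px_one_add_sq (dux z hz),
      S1 z hz, S2, S3]
  have hEy : py (msOp u) z
      = 2 * py u z * py (py u) z * px (px u) z + (1 + py u z ^ 2) * py (px (px u)) z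
        - ((2 * py (px u) z * py u z + 2 * px u z * py (py u) z) * py (px u) z
            + 2 * px u z * py u z * py (py (px u)) z)
        + (2 * px u z * py (px u) z * py (py u) z + (1 + px u z ^ 2) * py (py (py u)) z) := by
    rw [hmsOfun,
      py_add ((((duy z hz).fun_pow 2).const_add 1).fun_mul duxx |>.fun_sub
        ((((dux z hz).const_mul 2).fun_mul (duy z hz)).fun_mul duxy))
        ((((dux z hz).fun_pow 2).const_add 1).fun_mul duyy),
      py_sub ((((duy z hz).fun_pow 2).const_add 1).fun_mul duxx)
        ((((dux z hz).const_mul 2).fun_mul (duy z hz)).fun_mul duxy),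
      py_mul (((duy z hz).fun_pow 2).const_add 1) duxx,
      py_mul (((dux z hz).const_mul 2).fun_mul (duy z hz)) duxy,
      py_mul ((dux z hz).const_mul 2) (duy z hz),
      py_const_mul (dux z hz),
      py_mul (((dux z hz).fun_pow 2).const_add 1) duyy,
      py_one_add_sq (duy z hz), py_one_add_sq (dux z hz)]
  have hExE := hEx ▸ hEx0
  have hEyE := hEy ▸ hEy0
  -- the perturbed operator as an explicit polynomial in ε
  have key : ∀ ε : ℝ, msOp (fun w => u w + ε * v w) z
      = (1 + (py u z + ε * py v z) ^ 2) * (px (px u) z + ε * px (px v) z)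
        - 2 * (px u z + ε * px v z) * (py u z + ε * py v z) * (py (px u) z + ε * py (px v) z)
        + (1 + (px u z + ε * px v z) ^ 2) * (py (py u) z + ε * py (py v) z) := by
    intro ε
    have hFx : ∀ w ∈ Ω, px (fun w' => u w' + ε * v w') w = px u w + ε * px v w := by
      intro w hw
      rw [px_add (du w hw) ((dv w hw).const_mul ε), px_const_mul (dv w hw)]
    have hFy : ∀ w ∈ Ω, py (fun w' => u w' + ε * v w') w = py u w + ε * py v w := by
      intro w hw
      rw [py_add (du w hw) ((dv w hw).const_mul ε), py_const_mul (dv w hw)]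
    have hFxe : px (fun w' => u w' + ε * v w') =ᶠ[nhds z] fun w => px u w + ε * px v w :=
      Filter.eventuallyEq_of_mem hmem hFx
    have hFye : py (fun w' => u w' + ε * v w') =ᶠ[nhds z] fun w => py u w + ε * py v w :=
      Filter.eventuallyEq_of_mem hmem hFy
    have h1 : px (fun w' => u w' + ε * v w') z = px u z + ε * px v z := hFx z hz
    have h2 : py (fun w' => u w' + ε * v w') z = py u z + ε * py v z := hFy z hz
    have h3 : px (px (fun w' => u w' + ε * v w')) z = px (px u) z + ε * px (px v) z := by
      rw [px_congr hFxe, px_add (dux z hz) (dvx.const_mul ε), px_const_mul dvx]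
    have h4 : py (px (fun w' => u w' + ε * v w')) z = py (px u) z + ε * py (px v) z := by
      rw [py_congr hFxe, py_add (dux z hz) (dvx.const_mul ε), py_const_mul dvx]
    have h5 : py (py (fun w' => u w' + ε * v w')) z = py (py u) z + ε * py (py v) z := by
      rw [py_congr hFye, py_add (duy z hz) (dvy.const_mul ε), py_const_mul dvy]
    simp only [msOp]
    rw [h1, h2, h3, h4, h5]
  rw [show (fun ε : ℝ => msOp (fun w => u w + ε * v w) z)
      = fun ε : ℝ => (1 + (py u z + ε * py v z) ^ 2) * (px (px u) z + ε * px (px v) z)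
        - 2 * (px u z + ε * px v z) * (py u z + ε * py v z) * (py (px u) z + ε * py (px v) z)
        + (1 + (px u z + ε * px v z) ^ 2) * (py (py u) z + ε * py (py v) z) from funext key]
  have hA := affine_hasDerivAt (px u z) (px v z)
  have hB := affine_hasDerivAt (py u z) (py v z)
  have hP := affine_hasDerivAt (px (px u) z) (px (px v) z)
  have hQ := affine_hasDerivAt (py (px u) z) (py (px v) z)
  have hR := affine_hasDerivAt (py (py u) z) (py (py v) z)
  have hT := ((((hB.fun_pow 2).const_add 1).fun_mul hP).fun_sub
      ((((hasDerivAt_const (0:ℝ) (2:ℝ)).fun_mul hA).fun_mul hB).fun_mul hQ)).fun_add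
      (((hA.fun_pow 2).const_add 1).fun_mul hR)
  refine hT.congr_deriv (Eq.symm ?_)
  rw [hqa, hqb, hPv, hQv, hRv]
  linear_combination z.1 * hExE + z.2 * hEyE + hE0
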